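/- (Separability lemma) Assume the minipatch ranking framework on the pool S = {1,…,M} satisfies Rank Consistency with parameter p, Unbiased Ordering, and Bounded Deviation with constant C. Define Δ = min over all pairs j, j' ∈ {1,…,M} with r_j < r_{j'} of μ_{j'} − μ_j. Then Δ > (2p − 1)·(m − 1)/(M − 1). -/

import Mathlib

open MeasureTheory ProbabilityTheory Real
open scoped ENNReal Classical

noncomputable section

instance finsetMeasurableSpace {α : Type*} : MeasurableSpace (Finset α) := ⊤

/-- A random minipatch ranking on the pool `S ⊆ {1,…,M}`: `F` is uniformly
distributed over the size-`m` subsets of `S`, and (pointwise, hence conditionally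
on `F`) the ranks `rt j` for `j ∈ F` form a bijection from `F` onto `{0,…,m−1}`. -/
structure IsMinipatchRanking {Ω : Type*} [MeasurableSpace Ω] (μ : Measure Ω) {M : ℕ}
    (m : ℕ) (S : Finset (Fin M)) (F : Ω → Finset (Fin M)) (rt : Fin M → Ω → ℕ) : Prop where
  measF : Measurable F
  measRt : ∀ j, Measurable (rt j)
  subset : ∀ ω, F ω ⊆ S
  card_eq : ∀ ω, (F ω).card = m
  uniform : ∀ A : Finset (Fin M), A ⊆ S → A.card = m →
    μ {ω | F ω = A} = ((S.card.choose m : ℝ≥0∞))⁻¹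
  bij : ∀ ω, Set.BijOn (fun j => rt j ω) (F ω : Set (Fin M)) (Set.Iio m)

/-- `μ_j = E[r̃_j | j ∈ F]`. -/
def muRank {Ω : Type*} [MeasurableSpace Ω] (μ : Measure Ω) {M : ℕ}
    (F : Ω → Finset (Fin M)) (rt : Fin M → Ω → ℕ) (j : Fin M) : ℝ :=
  ∫ ω, (rt j ω : ℝ) ∂ μ[|{ω | j ∈ F ω}]

/-- Rank Consistency with parameter `p`. -/
def RankConsistency {Ω : Type*} [MeasurableSpace Ω] (μ : Measure Ω) {M : ℕ}
    (r : Fin M → ℕ) (S : Finset (Fin M)) (F : Ω → Finset (Fin M))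
    (rt : Fin M → Ω → ℕ) (p : ℝ) : Prop :=
  ∀ j ∈ S, ∀ j' ∈ S, r j < r j' →
    ENNReal.ofReal p ≤ μ[|{ω | j ∈ F ω ∧ j' ∈ F ω}] {ω | rt j ω < rt j' ω}

/-- Unbiased Ordering. -/
def UnbiasedOrdering {Ω : Type*} [MeasurableSpace Ω] (μ : Measure Ω) {M : ℕ}
    (r : Fin M → ℕ) (S : Finset (Fin M)) (F : Ω → Finset (Fin M))
    (rt : Fin M → Ω → ℕ) : Prop :=
  ∀ j ∈ S, ∀ j' ∈ S, r j < r j' →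
    (∫ ω, (rt j ω : ℝ) ∂ μ[|{ω | j ∈ F ω ∧ j' ∉ F ω}]) <
      ∫ ω, (rt j' ω : ℝ) ∂ μ[|{ω | j' ∈ F ω ∧ j ∉ F ω}]

/-- Bounded Deviation with constant `C`. -/
def BoundedDeviation {Ω : Type*} [MeasurableSpace Ω] (μ : Measure Ω) {M : ℕ}
    (r : Fin M → ℕ) (S : Finset (Fin M)) (F : Ω → Finset (Fin M))
    (rt : Fin M → Ω → ℕ) (C : ℝ) : Prop :=
  ∀ j ∈ S, ∀ j' ∈ S, r j < r j' →
    μ {ω | (j ∈ F ω ∧ j' ∈ F ω) ∧ rt j ω < rt j' ω} ≠ 0 →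
    μ {ω | (j ∈ F ω ∧ j' ∈ F ω) ∧ rt j' ω < rt j ω} ≠ 0 →
    C < (∫ ω, ((rt j' ω : ℝ) - (rt j ω : ℝ)) ∂ μ[|{ω | (j ∈ F ω ∧ j' ∈ F ω) ∧ rt j ω < rt j' ω}]) -
        ∫ ω, ((rt j ω : ℝ) - (rt j' ω : ℝ)) ∂ μ[|{ω | (j ∈ F ω ∧ j' ∈ F ω) ∧ rt j' ω < rt j ω}]

/-- Unique Top-`k` Ranks. -/
def UniqueTopK {M : ℕ} (r : Fin M → ℕ) (k : ℕ) : Prop :=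
  (∀ j j' : Fin M, j ≠ j' → min (r j) (r j') < k → r j ≠ r j') ∧
    ∀ s < k, ∃ j : Fin M, r j = s

/- ================= auxiliary lemmas ================= -/

lemma aux_count_mem {M : ℕ} (m : ℕ) (hm : 1 ≤ m) (s : Finset (Fin M)) (j : Fin M) (hj : j ∈ s) :
    ((s.powersetCard m).filter (fun A => j ∈ A)).card = (s.card - 1).choose (m-1) := by
  rw [← Finset.card_erase_of_mem hj, ← Finset.card_powersetCard]
  apply Finset.card_bij' (fun A _ => A.erase j) (fun B _ => insert j B)
  · intro A hA
    exact Finset.insert_erase (Finset.mem_filter.mp hA).2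
  · intro B hB
    apply Finset.erase_insert
    exact fun h => (Finset.mem_erase.mp ((Finset.mem_powersetCard.mp hB).1 h)).1 rfl
  · intro A hA
    simp only [Finset.mem_filter, Finset.mem_powersetCard] at hA ⊢
    exact ⟨Finset.erase_subset_erase j hA.1.1, by rw [Finset.card_erase_of_mem hA.2, hA.1.2]⟩
  · intro B hB
    simp only [Finset.mem_filter, Finset.mem_powersetCard] at hB ⊢
    have hjB : j ∉ B := fun h => (Finset.mem_erase.mp (hB.1 h)).1 rfl
    refine ⟨⟨?_, ?_⟩, Finset.mem_insert_self j B⟩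
    · intro x hx
      rcases Finset.mem_insert.mp hx with h | h
      · exact h ▸ hj
      · exact Finset.mem_of_mem_erase (hB.1 h)
    · rw [Finset.card_insert_of_notMem hjB, hB.2]; omega

lemma aux_count_pair {M : ℕ} (m : ℕ) (hm : 2 ≤ m) (hM : 2 ≤ M) (j j' : Fin M) (hne : j ≠ j') :
    (((Finset.univ : Finset (Fin M)).powersetCard m).filter
      (fun A => j ∈ A ∧ j' ∈ A)).card = (M - 2).choose (m-2) := by
  have h1 : (((Finset.univ : Finset (Fin M)).powersetCard m).filter
      (fun A => j ∈ A ∧ j' ∈ A)).card =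
      (((Finset.univ.erase j : Finset (Fin M)).powersetCard (m-1)).filter
        (fun A => j' ∈ A)).card := by
    apply Finset.card_bij' (fun A _ => A.erase j) (fun B _ => insert j B)
    · intro A hA
      exact Finset.insert_erase ((Finset.mem_filter.mp hA).2).1
    · intro B hB
      have hjB : j ∉ B := fun h =>
        (Finset.mem_erase.mp ((Finset.mem_powersetCard.mp (Finset.mem_filter.mp hB).1).1 h)).1 rfl
      exact Finset.erase_insert hjB
    · intro A hA
      simp only [Finset.mem_filter, Finset.mem_powersetCard] at hA ⊢
      refine ⟨⟨?_, ?_⟩, Finset.mem_erase.mpr ⟨hne.symm, hA.2.2⟩⟩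
      · exact Finset.erase_subset_erase j (Finset.subset_univ A)
      · rw [Finset.card_erase_of_mem hA.2.1, hA.1.2]
    · intro B hB
      simp only [Finset.mem_filter, Finset.mem_powersetCard] at hB ⊢
      have hjB : j ∉ B := fun h => (Finset.mem_erase.mp (hB.1.1 h)).1 rfl
      refine ⟨⟨Finset.subset_univ _, ?_⟩, Finset.mem_insert_self j B,
        Finset.mem_insert_of_mem hB.2⟩
      rw [Finset.card_insert_of_notMem hjB, hB.1.2]; omega
  rw [h1, aux_count_mem (m-1) (by omega) _ j' (Finset.mem_erase.mpr ⟨hne.symm, Finset.mem_univ _⟩)]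
  rw [Finset.card_erase_of_mem (Finset.mem_univ j), Finset.card_univ, Fintype.card_fin]
  congr 1 <;> omega

lemma aux_measurable_F {Ω : Type*} [MeasurableSpace Ω] {M : ℕ}
    {F : Ω → Finset (Fin M)} (hF : Measurable F) (T : Set (Finset (Fin M))) :
    MeasurableSet (F ⁻¹' T) := hF trivial

lemma aux_measure_event {Ω : Type*} [MeasurableSpace Ω] (μ : Measure Ω) {M m : ℕ}
    {F : Ω → Finset (Fin M)} {rt : Fin M → Ω → ℕ}
    (hmp : IsMinipatchRanking μ m Finset.univ F rt) (P : Finset (Fin M) → Prop) :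
    μ {ω | P (F ω)} =
      ((((Finset.univ : Finset (Fin M)).powersetCard m).filter P).card : ℝ≥0∞)
        * ((M.choose m : ℝ≥0∞))⁻¹ := by
  classical
  have hset : {ω | P (F ω)} =
      ⋃ A ∈ ((Finset.univ : Finset (Fin M)).powersetCard m).filter P, {ω | F ω = A} := by
    ext ω
    simp only [Set.mem_setOf_eq, Set.mem_iUnion, Finset.mem_filter, Finset.mem_powersetCard]
    constructor
    · intro h
      exact ⟨F ω, ⟨⟨Finset.subset_univ _, hmp.card_eq ω⟩, h⟩, rfl⟩
    · rintro ⟨A, ⟨_, hPA⟩, hFA⟩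
      exact hFA ▸ hPA
  rw [hset, measure_biUnion_finset]
  · rw [Finset.sum_congr rfl (fun A hA => hmp.uniform A
      (Finset.mem_powersetCard.mp (Finset.mem_filter.mp hA).1).1
      (Finset.mem_powersetCard.mp (Finset.mem_filter.mp hA).1).2)]
    rw [Finset.sum_const, nsmul_eq_mul, Finset.card_univ, Fintype.card_fin]
  · intro A _ B _ hAB
    simp only [Function.onFun, Set.disjoint_left]
    intro ω h1 h2
    exact hAB (h1.symm.trans h2)
  · intro A _
    exact aux_measurable_F hmp.measF {A}

lemma aux_cond_integral {Ω : Type*} [MeasurableSpace Ω] (μ : Measure Ω) (A : Set Ω) (f : Ω → ℝ) :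
    ∫ ω, f ω ∂ μ[|A] = (μ A).toReal⁻¹ * ∫ ω in A, f ω ∂μ := by
  rw [ProbabilityTheory.cond, integral_smul_measure, ENNReal.toReal_inv, smul_eq_mul]

lemma aux_integrableOn {Ω : Type*} [MeasurableSpace Ω] {μ : Measure Ω} [IsFiniteMeasure μ]
    {f : Ω → ℕ} (hf : Measurable f) {s : Set Ω} (hs : MeasurableSet s)
    {m : ℕ} (hb : ∀ ω ∈ s, f ω < m) :
    IntegrableOn (fun ω => (f ω : ℝ)) s μ := by
  apply Integrable.mono' (integrable_const (m : ℝ))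
  · exact ((measurable_from_top.comp hf : Measurable fun ω => (f ω : ℝ))).aestronglyMeasurable
  · rw [ae_restrict_iff' hs]
    filter_upwards with ω hω
    rw [Real.norm_eq_abs, abs_of_nonneg (by positivity)]
    exact_mod_cast (hb ω hω).le


set_option maxHeartbeats 2000000 in
theorem separability {Ω : Type*} [MeasurableSpace Ω] (μ : Measure Ω) [IsProbabilityMeasure μ]
    {M m : ℕ} (hm2 : 2 ≤ m) (hmM : m ≤ M)
    (r : Fin M → ℕ) (F : Ω → Finset (Fin M)) (rt : Fin M → Ω → ℕ)
    (p C : ℝ) (hp : 1 / 2 < p) (hp1 : p ≤ 1) (hC : 0 < C)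
    (hmp : IsMinipatchRanking μ m Finset.univ F rt)
    (hrc : RankConsistency μ r Finset.univ F rt p)
    (huo : UnbiasedOrdering μ r Finset.univ F rt)
    (hbd : BoundedDeviation μ r Finset.univ F rt C) :
    ∀ j j' : Fin M, r j < r j' →
      (2 * p - 1) * ((m : ℝ) - 1) / ((M : ℝ) - 1) < muRank μ F rt j' - muRank μ F rt j := by
  intro j j' hr
  have hne : j ≠ j' := fun h => lt_irrefl _ (h ▸ hr)
  have hM2 : 2 ≤ M := le_trans hm2 hmM
  have hp0 : (0:ℝ) < p := by linarith
  set Aj : Set Ω := {ω | j ∈ F ω} with hAjdef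
  set Aj' : Set Ω := {ω | j' ∈ F ω} with hAj'def
  set B : Set Ω := {ω | j ∈ F ω ∧ j' ∈ F ω} with hBdef
  set Cj : Set Ω := {ω | j ∈ F ω ∧ j' ∉ F ω} with hCjdef
  set Cj' : Set Ω := {ω | j' ∈ F ω ∧ j ∉ F ω} with hCj'def
  set Blt : Set Ω := {ω | (j ∈ F ω ∧ j' ∈ F ω) ∧ rt j ω < rt j' ω} with hBltdef
  set Bgt : Set Ω := {ω | (j ∈ F ω ∧ j' ∈ F ω) ∧ rt j' ω < rt j ω} with hBgtdef
  have mAj : MeasurableSet Aj := aux_measurable_F hmp.measF {A | j ∈ A}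
  have mAj' : MeasurableSet Aj' := aux_measurable_F hmp.measF {A | j' ∈ A}
  have mB : MeasurableSet B := aux_measurable_F hmp.measF {A | j ∈ A ∧ j' ∈ A}
  have mCj : MeasurableSet Cj := aux_measurable_F hmp.measF {A | j ∈ A ∧ j' ∉ A}
  have mCj' : MeasurableSet Cj' := aux_measurable_F hmp.measF {A | j' ∈ A ∧ j ∉ A}
  have mlt : MeasurableSet {ω | rt j ω < rt j' ω} :=
    measurableSet_lt (hmp.measRt j) (hmp.measRt j')
  have mgt : MeasurableSet {ω | rt j' ω < rt j ω} :=
    measurableSet_lt (hmp.measRt j') (hmp.measRt j)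
  have mBlt : MeasurableSet Blt := mB.inter mlt
  have mBgt : MeasurableSet Bgt := mB.inter mgt
  -- measures of the events
  have ha : μ Aj = (((M-1).choose (m-1) : ℕ) : ℝ≥0∞) * ((M.choose m : ℕ) : ℝ≥0∞)⁻¹ := by
    rw [hAjdef, aux_measure_event μ hmp (fun A => j ∈ A), Finset.filter_congr_decidable,
      aux_count_mem m (by omega) _ j (Finset.mem_univ j),
      Finset.card_univ, Fintype.card_fin]
  have ha' : μ Aj' = (((M-1).choose (m-1) : ℕ) : ℝ≥0∞) * ((M.choose m : ℕ) : ℝ≥0∞)⁻¹ := by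
    rw [hAj'def, aux_measure_event μ hmp (fun A => j' ∈ A), Finset.filter_congr_decidable,
      aux_count_mem m (by omega) _ j' (Finset.mem_univ j'),
      Finset.card_univ, Fintype.card_fin]
  have hb : μ B = (((M-2).choose (m-2) : ℕ) : ℝ≥0∞) * ((M.choose m : ℕ) : ℝ≥0∞)⁻¹ := by
    rw [hBdef, aux_measure_event μ hmp (fun A => j ∈ A ∧ j' ∈ A), Finset.filter_congr_decidable,
      aux_count_pair m hm2 hM2 j j' hne]
  have hsplit_count : ∀ (a b : Fin M),
      (((Finset.univ : Finset (Fin M)).powersetCard m).filter (fun A => a ∈ A ∧ b ∈ A)).card +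
      (((Finset.univ : Finset (Fin M)).powersetCard m).filter (fun A => a ∈ A ∧ b ∉ A)).card =
      (((Finset.univ : Finset (Fin M)).powersetCard m).filter (fun A => a ∈ A)).card := by
    intro a b
    classical
    rw [← Finset.filter_filter, ← Finset.filter_filter]
    exact Finset.card_filter_add_card_filter_not (fun A => b ∈ A)
  have hcount_comm :
      (((Finset.univ : Finset (Fin M)).powersetCard m).filter (fun A => j' ∈ A ∧ j ∈ A)).card
      = (M-2).choose (m-2) := by
    rw [← aux_count_pair m hm2 hM2 j j' hne]
    congr 1
    apply Finset.filter_congr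
    intro A _
    exact and_comm
  have hcj : μ Cj = (((M-1).choose (m-1) - (M-2).choose (m-2) : ℕ) : ℝ≥0∞)
      * ((M.choose m : ℕ) : ℝ≥0∞)⁻¹ := by
    rw [hCjdef, aux_measure_event μ hmp (fun A => j ∈ A ∧ j' ∉ A), Finset.filter_congr_decidable]
    congr 2
    have h := hsplit_count j j'
    rw [aux_count_pair m hm2 hM2 j j' hne,
      aux_count_mem m (by omega) _ j (Finset.mem_univ j),
      Finset.card_univ, Fintype.card_fin] at h
    omega
  have hcj' : μ Cj' = (((M-1).choose (m-1) - (M-2).choose (m-2) : ℕ) : ℝ≥0∞)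
      * ((M.choose m : ℕ) : ℝ≥0∞)⁻¹ := by
    rw [hCj'def, aux_measure_event μ hmp (fun A => j' ∈ A ∧ j ∉ A), Finset.filter_congr_decidable]
    congr 2
    have h := hsplit_count j' j
    rw [hcount_comm, aux_count_mem m (by omega) _ j' (Finset.mem_univ j'),
      Finset.card_univ, Fintype.card_fin] at h
    omega
  -- positivity
  have hn1pos : 0 < (M-1).choose (m-1) := Nat.choose_pos (by omega)
  have hn2pos : 0 < (M-2).choose (m-2) := Nat.choose_pos (by omega)
  have hNCne : ((M.choose m : ℕ) : ℝ≥0∞)⁻¹ ≠ 0 := ENNReal.inv_ne_zero.mpr (by simp)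
  have hbne : μ B ≠ 0 := by
    rw [hb]; exact mul_ne_zero (by exact_mod_cast hn2pos.ne') hNCne
  have hane : μ Aj ≠ 0 := by
    rw [ha]; exact mul_ne_zero (by exact_mod_cast hn1pos.ne') hNCne
  have hcc' : μ Cj' = μ Cj := by rw [hcj, hcj']
  -- Cj has positive measure, via Unbiased Ordering
  have hcne : μ Cj ≠ 0 := by
    intro h0
    have h0' : μ Cj' = 0 := hcc'.trans h0
    have huo' := huo j (Finset.mem_univ j) j' (Finset.mem_univ j') hr
    rw [← hCjdef, ← hCj'def, aux_cond_integral, aux_cond_integral,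
      show (∫ ω in Cj, (rt j ω : ℝ) ∂μ) = 0 from by
        rw [Measure.restrict_eq_zero.mpr h0]; exact integral_zero_measure _,
      show (∫ ω in Cj', (rt j' ω : ℝ) ∂μ) = 0 from by
        rw [Measure.restrict_eq_zero.mpr h0']; exact integral_zero_measure _] at huo'
    simp at huo'
  -- real-valued quantities
  have haRpos : 0 < (μ Aj).toReal := ENNReal.toReal_pos hane (measure_ne_top μ _)
  have hbRpos : 0 < (μ B).toReal := ENNReal.toReal_pos hbne (measure_ne_top μ _)
  have hcRpos : 0 < (μ Cj).toReal := ENNReal.toReal_pos hcne (measure_ne_top μ _)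
  -- splittings of sets
  have hBsplit : B = Blt ∪ Bgt := by
    ext ω
    simp only [hBdef, hBltdef, hBgtdef, Set.mem_setOf_eq, Set.mem_union]
    constructor
    · intro h
      have hne' : rt j ω ≠ rt j' ω := fun he =>
        hne ((hmp.bij ω).injOn (Finset.mem_coe.mpr h.1) (Finset.mem_coe.mpr h.2) he)
      rcases lt_or_gt_of_ne hne' with h' | h'
      · exact Or.inl ⟨h, h'⟩
      · exact Or.inr ⟨h, h'⟩
    · rintro (⟨h, _⟩ | ⟨h, _⟩) <;> exact h
  have hdisjB : Disjoint Blt Bgt := by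
    rw [Set.disjoint_left]
    rintro ω ⟨_, h1⟩ ⟨_, h2⟩
    omega
  have hstR : (μ Blt).toReal + (μ Bgt).toReal = (μ B).toReal := by
    rw [hBsplit, measure_union hdisjB mBgt,
      ENNReal.toReal_add (measure_ne_top μ _) (measure_ne_top μ _)]
  have hAsplit : Aj = B ∪ Cj := by
    ext ω
    simp only [hAjdef, hBdef, hCjdef, Set.mem_setOf_eq, Set.mem_union]
    tauto
  have hAsplit' : Aj' = B ∪ Cj' := by
    ext ω
    simp only [hAj'def, hBdef, hCj'def, Set.mem_setOf_eq, Set.mem_union]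
    tauto
  have hdisjBCj : Disjoint B Cj := by
    rw [Set.disjoint_left]
    rintro ω ⟨_, h1⟩ ⟨_, h2⟩
    exact h2 h1
  have hdisjBCj' : Disjoint B Cj' := by
    rw [Set.disjoint_left]
    rintro ω ⟨h1, _⟩ ⟨_, h2⟩
    exact h2 h1
  -- boundedness and integrability
  have hbound : ∀ (i : Fin M) (ω : Ω), i ∈ F ω → rt i ω < m := fun i ω hi =>
    (hmp.bij ω).mapsTo (Finset.mem_coe.mpr hi)
  have intAj : IntegrableOn (fun ω => (rt j ω : ℝ)) Aj μ :=
    aux_integrableOn (hmp.measRt j) mAj (fun ω hω => hbound j ω hω)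
  have intAj' : IntegrableOn (fun ω => (rt j' ω : ℝ)) Aj' μ :=
    aux_integrableOn (hmp.measRt j') mAj' (fun ω hω => hbound j' ω hω)
  have intBj : IntegrableOn (fun ω => (rt j ω : ℝ)) B μ :=
    aux_integrableOn (hmp.measRt j) mB (fun ω hω => hbound j ω hω.1)
  have intBj' : IntegrableOn (fun ω => (rt j' ω : ℝ)) B μ :=
    aux_integrableOn (hmp.measRt j') mB (fun ω hω => hbound j' ω hω.2)
  have intCj : IntegrableOn (fun ω => (rt j ω : ℝ)) Cj μ :=
    aux_integrableOn (hmp.measRt j) mCj (fun ω hω => hbound j ω hω.1)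
  have intCj' : IntegrableOn (fun ω => (rt j' ω : ℝ)) Cj' μ :=
    aux_integrableOn (hmp.measRt j') mCj' (fun ω hω => hbound j' ω hω.1)
  have intBltj : IntegrableOn (fun ω => (rt j ω : ℝ)) Blt μ :=
    aux_integrableOn (hmp.measRt j) mBlt (fun ω hω => hbound j ω hω.1.1)
  have intBltj' : IntegrableOn (fun ω => (rt j' ω : ℝ)) Blt μ :=
    aux_integrableOn (hmp.measRt j') mBlt (fun ω hω => hbound j' ω hω.1.2)
  have intBgtj : IntegrableOn (fun ω => (rt j ω : ℝ)) Bgt μ :=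
    aux_integrableOn (hmp.measRt j) mBgt (fun ω hω => hbound j ω hω.1.1)
  have intBgtj' : IntegrableOn (fun ω => (rt j' ω : ℝ)) Bgt μ :=
    aux_integrableOn (hmp.measRt j') mBgt (fun ω hω => hbound j' ω hω.1.2)
  -- integral decompositions
  have hIj : ∫ ω in Aj, (rt j ω : ℝ) ∂μ =
      (∫ ω in B, (rt j ω : ℝ) ∂μ) + ∫ ω in Cj, (rt j ω : ℝ) ∂μ := by
    rw [hAsplit]
    exact setIntegral_union hdisjBCj mCj intBj intCj
  have hIj' : ∫ ω in Aj', (rt j' ω : ℝ) ∂μ =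
      (∫ ω in B, (rt j' ω : ℝ) ∂μ) + ∫ ω in Cj', (rt j' ω : ℝ) ∂μ := by
    rw [hAsplit']
    exact setIntegral_union hdisjBCj' mCj' intBj' intCj'
  have hDB : ∫ ω in B, ((rt j' ω : ℝ) - (rt j ω : ℝ)) ∂μ =
      (∫ ω in B, (rt j' ω : ℝ) ∂μ) - ∫ ω in B, (rt j ω : ℝ) ∂μ :=
    integral_sub intBj' intBj
  have hDsplit : ∫ ω in B, ((rt j' ω : ℝ) - (rt j ω : ℝ)) ∂μ =
      (∫ ω in Blt, ((rt j' ω : ℝ) - (rt j ω : ℝ)) ∂μ) +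
        ∫ ω in Bgt, ((rt j' ω : ℝ) - (rt j ω : ℝ)) ∂μ := by
    rw [hBsplit]
    exact setIntegral_union hdisjB mBgt (intBltj'.sub intBltj) (intBgtj'.sub intBgtj)
  have hflip : ∫ ω in Bgt, ((rt j' ω : ℝ) - (rt j ω : ℝ)) ∂μ =
      - ∫ ω in Bgt, ((rt j ω : ℝ) - (rt j' ω : ℝ)) ∂μ := by
    rw [← integral_neg]
    congr 1
    ext ω
    ring
  -- integral lower bounds
  have hlb_lt : 1 * (μ Blt).toReal ≤ ∫ ω in Blt, ((rt j' ω : ℝ) - (rt j ω : ℝ)) ∂μ := by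
    apply setIntegral_ge_of_const_le_real mBlt (measure_ne_top μ _) _ (intBltj'.sub intBltj)
    intro ω hω
    have h : 1 + rt j ω ≤ rt j' ω := by have := hω.2; omega
    have h' : (1:ℝ) + (rt j ω : ℝ) ≤ (rt j' ω : ℝ) := by exact_mod_cast h
    show (1:ℝ) ≤ (rt j' ω : ℝ) - (rt j ω : ℝ)
    linarith
  have hlb_gt : 1 * (μ Bgt).toReal ≤ ∫ ω in Bgt, ((rt j ω : ℝ) - (rt j' ω : ℝ)) ∂μ := by
    apply setIntegral_ge_of_const_le_real mBgt (measure_ne_top μ _) _ (intBgtj.sub intBgtj')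
    intro ω hω
    have h : 1 + rt j' ω ≤ rt j ω := by have := hω.2; omega
    have h' : (1:ℝ) + (rt j' ω : ℝ) ≤ (rt j ω : ℝ) := by exact_mod_cast h
    show (1:ℝ) ≤ (rt j ω : ℝ) - (rt j' ω : ℝ)
    linarith
  -- rank consistency in real form
  have hrcR : p * (μ B).toReal ≤ (μ Blt).toReal := by
    have hrc' := hrc j (Finset.mem_univ j) j' (Finset.mem_univ j') hr
    rw [← hBdef, cond_apply mB] at hrc'
    have hBint : B ∩ {ω | rt j ω < rt j' ω} = Blt := rfl
    rw [hBint] at hrc'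
    have h1 : ENNReal.ofReal p * μ B ≤ μ Blt := by
      calc ENNReal.ofReal p * μ B ≤ ((μ B)⁻¹ * μ Blt) * μ B := by
            exact mul_le_mul_left hrc' _
        _ = μ Blt := by
            rw [mul_comm (μ B)⁻¹ (μ Blt), mul_assoc,
              ENNReal.inv_mul_cancel hbne (measure_ne_top μ _), mul_one]
    have h2 := ENNReal.toReal_mono (measure_ne_top μ _) h1
    rwa [ENNReal.toReal_mul, ENNReal.toReal_ofReal hp0.le] at h2
  -- unbiased ordering in set-integral form
  have hUO : (∫ ω in Cj, (rt j ω : ℝ) ∂μ) < ∫ ω in Cj', (rt j' ω : ℝ) ∂μ := by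
    have huo' := huo j (Finset.mem_univ j) j' (Finset.mem_univ j') hr
    rw [← hCjdef, ← hCj'def, aux_cond_integral, aux_cond_integral, hcc'] at huo'
    have hpos : (0:ℝ) < (μ Cj).toReal⁻¹ := by positivity
    exact lt_of_mul_lt_mul_left (by linarith [huo']) hpos.le
  -- the key bound on the B-part
  have hkey : (2*p - 1) * (μ B).toReal ≤ ∫ ω in B, ((rt j' ω : ℝ) - (rt j ω : ℝ)) ∂μ := by
    by_cases htzero : μ Bgt = 0
    · have htR0 : (μ Bgt).toReal = 0 := by rw [htzero]; rfl
      have hZ : ∫ ω in Bgt, ((rt j' ω : ℝ) - (rt j ω : ℝ)) ∂μ = 0 := by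
        rw [Measure.restrict_eq_zero.mpr htzero]; exact integral_zero_measure _
      rw [hDsplit, hZ, add_zero]
      have hsb : (μ Blt).toReal = (μ B).toReal := by linarith [hstR]
      nlinarith [hlb_lt, hbRpos]
    · have htRpos : 0 < (μ Bgt).toReal := ENNReal.toReal_pos htzero (measure_ne_top μ _)
      have hsne : μ Blt ≠ 0 := by
        intro h0
        have : (μ Blt).toReal = 0 := by rw [h0]; rfl
        nlinarith [hrcR, hbRpos]
      have hsRpos : 0 < (μ Blt).toReal := ENNReal.toReal_pos hsne (measure_ne_top μ _)
      have hbd' := hbd j (Finset.mem_univ j) j' (Finset.mem_univ j') hr hsne htzero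
      rw [← hBltdef, ← hBgtdef, aux_cond_integral, aux_cond_integral] at hbd'
      set IL := ∫ ω in Blt, ((rt j' ω : ℝ) - (rt j ω : ℝ)) ∂μ with hILdef
      set IG := ∫ ω in Bgt, ((rt j ω : ℝ) - (rt j' ω : ℝ)) ∂μ with hIGdef
      rw [hDsplit, hflip]
      set sR := (μ Blt).toReal
      set tR := (μ Bgt).toReal
      -- hbd' : C < sR⁻¹ * IL - tR⁻¹ * IG
      have hAA : sR ≤ IL := by linarith [hlb_lt]
      have hBB : tR ≤ IG := by linarith [hlb_gt]
      have hbd2 : (C + tR⁻¹ * IG) * sR ≤ IL := by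
        have h3 : C + tR⁻¹ * IG ≤ sR⁻¹ * IL := by linarith
        calc (C + tR⁻¹ * IG) * sR ≤ (sR⁻¹ * IL) * sR := by nlinarith
          _ = IL := by field_simp
      set BB := tR⁻¹ * IG with hBBdef
      have hBB1 : 1 ≤ BB := by
        rw [hBBdef, ← div_eq_inv_mul, le_div_iff₀ htRpos, one_mul]
        exact hBB
      have hIGeq : IG = tR * BB := by
        rw [hBBdef]
        field_simp
      have h1 : (2*p-1) * (μ B).toReal ≤ sR - tR := by
        have := hstR
        nlinarith [hrcR]
      have h0 : 0 ≤ sR - tR := by nlinarith [hbRpos]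
      have hsmt : (2*p-1) * (μ B).toReal ≤ (sR - tR) * BB := by nlinarith [hBB1, h1, h0]
      nlinarith [hbd2, hsmt, mul_nonneg hC.le hsRpos.le, hIGeq]
  -- assemble
  have hmuj : muRank μ F rt j = (μ Aj).toReal⁻¹ * ∫ ω in Aj, (rt j ω : ℝ) ∂μ := by
    rw [show muRank μ F rt j = ∫ ω, (rt j ω : ℝ) ∂ μ[|Aj] from rfl, aux_cond_integral]
  have hmuj' : muRank μ F rt j' = (μ Aj').toReal⁻¹ * ∫ ω in Aj', (rt j' ω : ℝ) ∂μ := by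
    rw [show muRank μ F rt j' = ∫ ω, (rt j' ω : ℝ) ∂ μ[|Aj'] from rfl, aux_cond_integral]
  have haa' : μ Aj' = μ Aj := by rw [ha, ha']
  have hDU : muRank μ F rt j' - muRank μ F rt j =
      (μ Aj).toReal⁻¹ * ((∫ ω in B, ((rt j' ω : ℝ) - (rt j ω : ℝ)) ∂μ) +
        ((∫ ω in Cj', (rt j' ω : ℝ) ∂μ) - ∫ ω in Cj, (rt j ω : ℝ) ∂μ)) := by
    rw [hmuj, hmuj', haa', hIj, hIj', hDB]
    ring
  -- combinatorial ratio identity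
  have hchooseid : (M-1) * ((M-2).choose (m-2)) = ((M-1).choose (m-1)) * (m-1) := by
    have h := Nat.add_one_mul_choose_eq (M-2) (m-2)
    have e1 : M-2+1 = M - 1 := by omega
    have e2 : m-2+1 = m - 1 := by omega
    rw [e1, e2] at h
    exact h
  have hratio : ((m:ℝ) - 1) * (μ Aj).toReal = ((M:ℝ) - 1) * (μ B).toReal := by
    rw [ha, hb, ENNReal.toReal_mul, ENNReal.toReal_mul]
    have hm1 : ((m:ℝ) - 1) = ((m - 1 : ℕ) : ℝ) := by
      rw [Nat.cast_sub (by omega : 1 ≤ m)]; norm_num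
    have hM1 : ((M:ℝ) - 1) = ((M - 1 : ℕ) : ℝ) := by
      rw [Nat.cast_sub (by omega : 1 ≤ M)]; norm_num
    rw [hm1, hM1]
    have hnat : (m-1) * ((M-1).choose (m-1)) = (M-1) * ((M-2).choose (m-2)) := by
      rw [hchooseid]
      exact Nat.mul_comm _ _
    have hcast : ((m - 1 : ℕ) : ℝ) * (((M-1).choose (m-1) : ℕ) : ℝ≥0∞).toReal =
        ((M - 1 : ℕ) : ℝ) * (((M-2).choose (m-2) : ℕ) : ℝ≥0∞).toReal := by
      simp only [ENNReal.toReal_natCast]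
      exact_mod_cast hnat
    rw [← mul_assoc, ← mul_assoc, hcast]
  have hM1pos : (0:ℝ) < (M:ℝ) - 1 := by
    have h2M : (2:ℝ) ≤ (M:ℝ) := by exact_mod_cast hM2
    linarith
  rw [hDU]
  have hUpos : 0 < (∫ ω in Cj', (rt j' ω : ℝ) ∂μ) - ∫ ω in Cj, (rt j ω : ℝ) ∂μ := by
    linarith [hUO]
  have hlhs : (2*p-1) * ((m:ℝ)-1) / ((M:ℝ)-1) = (2*p-1) * (μ B).toReal / (μ Aj).toReal := by
    field_simp
    linear_combination (2*p-1) * hratio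
  have hfinal : (2*p-1) * (μ B).toReal <
      (∫ ω in B, ((rt j' ω : ℝ) - (rt j ω : ℝ)) ∂μ) +
        ((∫ ω in Cj', (rt j' ω : ℝ) ∂μ) - ∫ ω in Cj, (rt j ω : ℝ) ∂μ) := by
    linarith [hkey]
  calc (2*p-1) * ((m:ℝ)-1) / ((M:ℝ)-1)
      = (μ Aj).toReal⁻¹ * ((2*p-1) * (μ B).toReal) := by rw [hlhs]; ring
    _ < (μ Aj).toReal⁻¹ * ((∫ ω in B, ((rt j' ω : ℝ) - (rt j ω : ℝ)) ∂μ) +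
        ((∫ ω in Cj', (rt j' ω : ℝ) ∂μ) - ∫ ω in Cj, (rt j ω : ℝ) ∂μ)) := by
        exact mul_lt_mul_of_pos_left hfinal (by positivity)
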